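/- Suppose φ ∈ W₂^s(ℝ^d), k > s, k ≥ 0, and there exists C > 0 and a neighborhood Ω of 0 such that M(ω) := [φ̂,φ̂]⁰_s(ω)/([φ̂,φ̂]_s(ω)·|ω|^{2k−2s}) ≤ C a.e. on Ω. Then for all sufficiently small Ω′ ⊆ Ω, one has [φ̂,φ̂]⁰_t(ω) ≤ 2C·|φ̂(ω)|²·|ω|^{2k} a.e. on Ω′ for every t ≤ s; consequently M_t(ω) := [φ̂,φ̂]⁰_t(ω)/([φ̂,φ̂]_t(ω)·|ω|^{2k−2t}) ≤ 2C a.e. near 0. -/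

import Mathlib

open MeasureTheory Set
open scoped ENNReal

noncomputable def lattPt (d : ℕ) (a : Fin d → ℤ) : EuclideanSpace ℝ (Fin d) :=
  (EuclideanSpace.equiv (Fin d) ℝ).symm fun i => 2 * Real.pi * (a i : ℝ)

/-- The truncated bracket product `[f,f]⁰_s(ω)`. -/
noncomputable def truncBracket (d : ℕ) (s : ℝ) (f : EuclideanSpace ℝ (Fin d) → ℂ)
    (ω : EuclideanSpace ℝ (Fin d)) : ℝ≥0∞ :=
  ∑' a : {a : Fin d → ℤ // a ≠ 0},
    (‖f (ω + lattPt d a)‖₊ : ℝ≥0∞) ^ 2 * (‖ω + lattPt d a‖₊ : ℝ≥0∞) ^ (2 * s)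

/-- The full bracket product `[f,f]_s(ω) = [f,f]⁰_s(ω) + |f(ω)|² |ω|^{2s}`. -/
noncomputable def fullBracket (d : ℕ) (s : ℝ) (f : EuclideanSpace ℝ (Fin d) → ℂ)
    (ω : EuclideanSpace ℝ (Fin d)) : ℝ≥0∞ :=
  truncBracket d s f ω + (‖f ω‖₊ : ℝ≥0∞) ^ 2 * (‖ω‖₊ : ℝ≥0∞) ^ (2 * s)

private lemma norm_lattPt (d : ℕ) {a : Fin d → ℤ} (ha : a ≠ 0) :
    2 * Real.pi ≤ ‖lattPt d a‖ := by
  obtain ⟨i, hi⟩ := Function.ne_iff.1 ha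
  have h0 : lattPt d a i = 2 * Real.pi * a i := by simp [lattPt]
  have h1 : |lattPt d a i| ≤ ‖lattPt d a‖ := by
    rw [EuclideanSpace.norm_eq]
    have : |lattPt d a i| = Real.sqrt (‖lattPt d a i‖ ^ 2) := by
      rw [Real.sqrt_sq_eq_abs, Real.norm_eq_abs, abs_abs]
    rw [this]
    apply Real.sqrt_le_sqrt
    exact Finset.single_le_sum (f := fun j => ‖lattPt d a j‖ ^ 2)
      (fun j _ => sq_nonneg _) (Finset.mem_univ i)
  refine le_trans ?_ h1
  rw [h0, abs_mul, abs_of_nonneg (by positivity : (0:ℝ) ≤ 2 * Real.pi)]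
  have : (1:ℝ) ≤ |(a i : ℝ)| := by
    rw [← Int.cast_abs]; exact_mod_cast Int.one_le_abs hi
  nlinarith [Real.pi_pos]

private lemma lattPt_sub (d : ℕ) (a b : Fin d → ℤ) :
    lattPt d a - lattPt d b = lattPt d (a - b) := by
  ext i
  simp [lattPt]
  ring

/-- points near the origin shifted by a nonzero lattice point are far from 0. -/
private lemma one_le_shift (d : ℕ) {a : Fin d → ℤ} (ha : a ≠ 0)
    {ω : EuclideanSpace ℝ (Fin d)} (hω : ‖ω‖ ≤ 1) : 1 ≤ ‖ω + lattPt d a‖ := by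
  have h1 := norm_lattPt d ha
  have h2 : ‖lattPt d a‖ ≤ ‖ω + lattPt d a‖ + ‖ω‖ := by
    calc ‖lattPt d a‖ = ‖(ω + lattPt d a) - ω‖ := by congr 1; abel
    _ ≤ ‖ω + lattPt d a‖ + ‖ω‖ := norm_sub_le _ _
  have := Real.pi_gt_three
  linarith

private lemma trunc_mono (d : ℕ) {s t : ℝ} (hts : t ≤ s)
    (f : EuclideanSpace ℝ (Fin d) → ℂ) {ω : EuclideanSpace ℝ (Fin d)} (hω : ‖ω‖ ≤ 1) :
    truncBracket d t f ω ≤ truncBracket d s f ω := by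
  refine ENNReal.tsum_le_tsum fun a => ?_
  refine mul_le_mul_right ?_ _
  refine ENNReal.rpow_le_rpow_of_exponent_le ?_ (by linarith)
  have h1 := one_le_shift d a.2 hω
  rw [← ENNReal.coe_one, ENNReal.coe_le_coe, ← NNReal.coe_le_coe]
  simpa using h1

private lemma term_measurable (d : ℕ) (s : ℝ) (φhat : EuclideanSpace ℝ (Fin d) → ℂ)
    (hmeas : Measurable φhat) (v : EuclideanSpace ℝ (Fin d)) :
    Measurable fun ω : EuclideanSpace ℝ (Fin d) =>
      (‖φhat (ω + v)‖₊ : ℝ≥0∞) ^ 2 * (‖ω + v‖₊ : ℝ≥0∞) ^ (2 * s) := by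
  have h1 : Measurable fun ω : EuclideanSpace ℝ (Fin d) => ω + v :=
    measurable_id.add_const v
  exact ((measurable_coe_nnreal_ennreal.comp ((hmeas.comp h1).nnnorm)).pow_const 2).mul
    (ENNReal.continuous_rpow_const.measurable.comp
      (measurable_coe_nnreal_ennreal.comp h1.nnnorm))

private lemma trunc_measurable (d : ℕ) (s : ℝ) (φhat : EuclideanSpace ℝ (Fin d) → ℂ)
    (hmeas : Measurable φhat) : Measurable (truncBracket d s φhat) :=
  Measurable.ennreal_tsum fun a => term_measurable d s φhat hmeas (lattPt d a)

private lemma real_bound {s r : ℝ} (hr : 1 ≤ r) :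
    r ^ (2 * s) ≤ 2 ^ (2 * |s|) * (1 + r) ^ (2 * s) := by
  rcases le_or_gt 0 s with hs | hs
  · have h1 : r ^ (2*s) ≤ (1+r) ^ (2*s) :=
      Real.rpow_le_rpow (by linarith) (by linarith) (by linarith)
    have h2 : (1:ℝ) ≤ 2 ^ (2*|s|) := by
      have := Real.rpow_le_rpow_of_exponent_le one_le_two
        (show (0:ℝ) ≤ 2*|s| by positivity)
      simpa using this
    nlinarith [Real.rpow_nonneg (show (0:ℝ) ≤ 1+r by linarith) (2*s)]
  · rw [abs_of_neg hs]
    have h2 : (2*r) ^ (2*s) ≤ (1+r) ^ (2*s) :=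
      Real.rpow_le_rpow_of_nonpos (by linarith) (by linarith) (by linarith)
    rw [Real.mul_rpow (by norm_num) (by linarith)] at h2
    have h3 : (0:ℝ) < 2 ^ (2*s) := Real.rpow_pos_of_pos two_pos _
    have h4 : (2:ℝ) ^ (2*(-s)) * 2 ^ (2*s) = 1 := by
      rw [← Real.rpow_add two_pos]
      norm_num
    calc r ^ (2*s) = 2 ^ (2*(-s)) * (2 ^ (2*s) * r ^ (2*s)) := by
          rw [← mul_assoc, h4, one_mul]
    _ ≤ 2 ^ (2*(-s)) * (1+r) ^ (2*s) :=
        mul_le_mul_of_nonneg_left h2 (Real.rpow_pos_of_pos two_pos _).le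

private lemma shift_integral (d : ℕ) (g : EuclideanSpace ℝ (Fin d) → ℝ≥0∞)
    (v : EuclideanSpace ℝ (Fin d)) (ε : ℝ) :
    ∫⁻ ω in Metric.ball (0 : EuclideanSpace ℝ (Fin d)) ε, g (ω + v)
      = ∫⁻ x in Metric.ball v ε, g x := by
  rw [← lintegral_indicator Metric.isOpen_ball.measurableSet,
    ← lintegral_indicator Metric.isOpen_ball.measurableSet,
    ← lintegral_add_right_eq_self (fun x => (Metric.ball v ε).indicator g x) v]
  congr 1
  funext ω
  have hmem : ω + v ∈ Metric.ball v ε ↔ ω ∈ Metric.ball (0 : EuclideanSpace ℝ (Fin d)) ε := by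
    simp [Metric.mem_ball, dist_eq_norm]
  by_cases h : ω ∈ Metric.ball (0 : EuclideanSpace ℝ (Fin d)) ε <;>
    simp [Set.indicator, h, hmem]

private lemma ae_trunc_finite (d : ℕ) (s : ℝ) (φhat : EuclideanSpace ℝ (Fin d) → ℂ)
    (hmeas : Measurable φhat)
    (hφ : ∫⁻ ξ, ENNReal.ofReal ((1 + ‖ξ‖) ^ (2 * s)) * (‖φhat ξ‖₊ : ℝ≥0∞) ^ 2 < ⊤)
    {ε : ℝ} (hε0 : 0 < ε) (hε1 : ε ≤ 1) :
    ∀ᵐ ω ∂volume, ω ∈ Metric.ball (0 : EuclideanSpace ℝ (Fin d)) ε →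
      truncBracket d s φhat ω < ⊤ := by
  set g : EuclideanSpace ℝ (Fin d) → ℝ≥0∞ :=
    fun ξ => (‖φhat ξ‖₊ : ℝ≥0∞) ^ 2 * (‖ξ‖₊ : ℝ≥0∞) ^ (2 * s) with hg
  set h : EuclideanSpace ℝ (Fin d) → ℝ≥0∞ :=
    fun ξ => ENNReal.ofReal ((1 + ‖ξ‖) ^ (2 * s)) * (‖φhat ξ‖₊ : ℝ≥0∞) ^ 2 with hh
  have hhmeas : Measurable h := by
    have cont : Continuous fun ξ : EuclideanSpace ℝ (Fin d) => (1 + ‖ξ‖) ^ (2 * s) :=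
      Continuous.rpow_const (continuous_const.add continuous_norm)
        (fun x => Or.inl (by positivity))
    exact (ENNReal.measurable_ofReal.comp cont.measurable).mul
      ((measurable_coe_nnreal_ennreal.comp hmeas.nnnorm).pow_const 2)
  have hπ := Real.pi_gt_three
  have key : ∫⁻ ω in Metric.ball (0 : EuclideanSpace ℝ (Fin d)) ε,
      truncBracket d s φhat ω < ⊤ := by
    have step1 : ∫⁻ ω in Metric.ball (0 : EuclideanSpace ℝ (Fin d)) ε,
        truncBracket d s φhat ω
        = ∑' a : {a : Fin d → ℤ // a ≠ 0},
            ∫⁻ x in Metric.ball (lattPt d a) ε, g x := by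
      rw [show (fun ω => truncBracket d s φhat ω)
          = fun ω => ∑' a : {a : Fin d → ℤ // a ≠ 0}, g (ω + lattPt d a) from rfl]
      rw [lintegral_tsum fun a : {a : Fin d → ℤ // a ≠ 0} => ((term_measurable d s φhat hmeas (lattPt d (a : Fin d → ℤ))).aemeasurable)]
      exact tsum_congr fun a => shift_integral d g (lattPt d a) ε
    have hdisj : Pairwise (Function.onFun Disjoint
        fun a : {a : Fin d → ℤ // a ≠ 0} => Metric.ball (lattPt d (a : Fin d → ℤ)) ε) := by
      intro a b hab
      apply Metric.ball_disjoint_ball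
      have hne : (a : Fin d → ℤ) - b ≠ 0 := sub_ne_zero_of_ne (Subtype.coe_injective.ne hab)
      have := norm_lattPt d hne
      rw [← lattPt_sub] at this
      rw [dist_eq_norm]
      linarith
    have step2 : ∑' a : {a : Fin d → ℤ // a ≠ 0},
        ∫⁻ x in Metric.ball (lattPt d (a : Fin d → ℤ)) ε, g x
        = ∫⁻ x in ⋃ a : {a : Fin d → ℤ // a ≠ 0},
            Metric.ball (lattPt d (a : Fin d → ℤ)) ε, g x :=
      (lintegral_iUnion (fun a => Metric.isOpen_ball.measurableSet) hdisj g).symm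
    have step3 : ∫⁻ x in ⋃ a : {a : Fin d → ℤ // a ≠ 0},
        Metric.ball (lattPt d (a : Fin d → ℤ)) ε, g x
        ≤ ∫⁻ x, ENNReal.ofReal (2 ^ (2 * |s|)) * h x := by
      refine le_trans (setLIntegral_mono'
        (MeasurableSet.iUnion fun a => Metric.isOpen_ball.measurableSet) ?_)
        (setLIntegral_le_lintegral _ _)
      intro x hx
      obtain ⟨a, ha⟩ := Set.mem_iUnion.1 hx
      have hx1 : 1 ≤ ‖x‖ := by
        have h1 := norm_lattPt d a.2
        have h2 : dist x (lattPt d (a : Fin d → ℤ)) < ε := Metric.mem_ball.1 ha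
        have h3 : ‖lattPt d (a : Fin d → ℤ)‖ ≤ ‖x‖ + ‖x - lattPt d (a : Fin d → ℤ)‖ := by
          calc ‖lattPt d (a : Fin d → ℤ)‖ = ‖x - (x - lattPt d (a : Fin d → ℤ))‖ := by
                congr 1; abel
          _ ≤ ‖x‖ + ‖x - lattPt d (a : Fin d → ℤ)‖ := norm_sub_le _ _
        rw [dist_eq_norm] at h2
        linarith
      have hxpos : (0:ℝ) < ‖x‖ := by linarith
      have hb : (‖x‖₊ : ℝ≥0∞) ^ (2 * s)
          ≤ ENNReal.ofReal (2 ^ (2 * |s|) * (1 + ‖x‖) ^ (2 * s)) := by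
        have : (‖x‖₊ : ℝ≥0∞) ^ (2 * s) = ENNReal.ofReal (‖x‖ ^ (2 * s)) := by
          rw [← enorm_eq_nnnorm, ← ofReal_norm, ← ENNReal.ofReal_rpow_of_pos hxpos]
        rw [this]
        exact ENNReal.ofReal_le_ofReal (real_bound hx1)
      calc g x = (‖φhat x‖₊ : ℝ≥0∞) ^ 2 * (‖x‖₊ : ℝ≥0∞) ^ (2 * s) := rfl
      _ ≤ (‖φhat x‖₊ : ℝ≥0∞) ^ 2
          * ENNReal.ofReal (2 ^ (2 * |s|) * (1 + ‖x‖) ^ (2 * s)) :=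
            mul_le_mul_right hb _
      _ = ENNReal.ofReal (2 ^ (2 * |s|)) * h x := by
            rw [ENNReal.ofReal_mul (by positivity)]
            rw [hh]; ring
    have step4 : ∫⁻ x, ENNReal.ofReal (2 ^ (2 * |s|)) * h x < ⊤ := by
      rw [lintegral_const_mul _ hhmeas]
      exact ENNReal.mul_lt_top ENNReal.ofReal_lt_top hφ
    calc ∫⁻ ω in Metric.ball (0 : EuclideanSpace ℝ (Fin d)) ε, truncBracket d s φhat ω
        = ∫⁻ x in ⋃ a : {a : Fin d → ℤ // a ≠ 0},
            Metric.ball (lattPt d (a : Fin d → ℤ)) ε, g x := step1.trans step2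
    _ ≤ ∫⁻ x, ENNReal.ofReal (2 ^ (2 * |s|)) * h x := step3
    _ < ⊤ := step4
  have := ae_lt_top (μ := volume.restrict (Metric.ball (0 : EuclideanSpace ℝ (Fin d)) ε))
    (trunc_measurable d s φhat hmeas) key.ne
  rwa [ae_restrict_iff' Metric.isOpen_ball.measurableSet] at this
theorem approx_order_persists_in_smaller_smoothness (d : ℕ) (s t k C : ℝ)
    (hts : t ≤ s) (hsk : s < k) (hk : 0 ≤ k) (hC : 0 < C)
    (φhat : EuclideanSpace ℝ (Fin d) → ℂ) (hmeas : Measurable φhat)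
    (hφ : ∫⁻ ξ, ENNReal.ofReal ((1 + ‖ξ‖) ^ (2 * s)) * (‖φhat ξ‖₊ : ℝ≥0∞) ^ 2 < ⊤)
    (Ω : Set (EuclideanSpace ℝ (Fin d))) (hΩ : Ω ∈ nhds (0 : EuclideanSpace ℝ (Fin d)))
    (hM : ∀ᵐ ω ∂volume, ω ∈ Ω →
      truncBracket d s φhat ω
          / (fullBracket d s φhat ω * (‖ω‖₊ : ℝ≥0∞) ^ (2 * k - 2 * s))
        ≤ ENNReal.ofReal C) :
    ∃ Ω' ∈ nhds (0 : EuclideanSpace ℝ (Fin d)), Ω' ⊆ Ω ∧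
      (∀ᵐ ω ∂volume, ω ∈ Ω' →
        truncBracket d t φhat ω
          ≤ ENNReal.ofReal (2 * C) * (‖φhat ω‖₊ : ℝ≥0∞) ^ 2 * (‖ω‖₊ : ℝ≥0∞) ^ (2 * k)) ∧
      (∀ᵐ ω ∂volume, ω ∈ Ω' →
        truncBracket d t φhat ω
            / (fullBracket d t φhat ω * (‖ω‖₊ : ℝ≥0∞) ^ (2 * k - 2 * t))
          ≤ ENNReal.ofReal (2 * C)) := by
  obtain ⟨R, hR0, hRΩ⟩ := Metric.mem_nhds_iff.1 hΩ
  have hP : (0:ℝ) < 2 * k - 2 * s := by linarith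
  set δ : ℝ := (1 / (2 * C)) ^ ((2 * k - 2 * s)⁻¹) with hδdef
  have hδ0 : 0 < δ := Real.rpow_pos_of_pos (by positivity) _
  have hδP : C * δ ^ (2 * k - 2 * s) = 1 / 2 := by
    rw [hδdef, ← Real.rpow_mul (by positivity : (0:ℝ) ≤ 1 / (2 * C)),
      inv_mul_cancel₀ hP.ne', Real.rpow_one]
    field_simp
  set ε : ℝ := min R (min 1 δ) with hεdef
  have hε0 : 0 < ε := lt_min hR0 (lt_min one_pos hδ0)
  have hε1 : ε ≤ 1 := le_trans (min_le_right _ _) (min_le_left _ _)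
  have hεδ : ε ≤ δ := le_trans (min_le_right _ _) (min_le_right _ _)
  have hεR : ε ≤ R := min_le_left _ _
  refine ⟨Metric.ball 0 ε ∩ Ω, Filter.inter_mem (Metric.ball_mem_nhds _ hε0) hΩ,
    Set.inter_subset_right, ?_⟩
  have main : ∀ᵐ ω ∂(volume : Measure (EuclideanSpace ℝ (Fin d))),
      ω ∈ Metric.ball (0 : EuclideanSpace ℝ (Fin d)) ε ∩ Ω →
      (truncBracket d t φhat ω
          ≤ ENNReal.ofReal (2 * C) * (‖φhat ω‖₊ : ℝ≥0∞) ^ 2 * (‖ω‖₊ : ℝ≥0∞) ^ (2 * k)) ∧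
      (truncBracket d t φhat ω
            / (fullBracket d t φhat ω * (‖ω‖₊ : ℝ≥0∞) ^ (2 * k - 2 * t))
          ≤ ENNReal.ofReal (2 * C)) := by
    filter_upwards [hM, ae_trunc_finite d s φhat hmeas hφ hε0 hε1] with ω hM' hfin'
    rintro ⟨hball, hΩω⟩
    have hMω := hM' hΩω
    have hfin := hfin' hball
    have hωn : ‖ω‖ < ε := by simpa [dist_eq_norm] using Metric.mem_ball.1 hball
    set r : ℝ≥0∞ := (‖ω‖₊ : ℝ≥0∞) with hrdef
    set Ts := truncBracket d s φhat ω with hTs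
    set Tt := truncBracket d t φhat ω with hTt
    set Q := (‖φhat ω‖₊ : ℝ≥0∞) ^ 2 with hQ
    -- step A: ofReal C * r ^ P ≤ 2⁻¹
    have hA : ENNReal.ofReal C * r ^ (2 * k - 2 * s) ≤ 2⁻¹ := by
      have h1 : r = ENNReal.ofReal ‖ω‖ := by
        rw [hrdef, ofReal_norm, enorm_eq_nnnorm]
      rw [h1, ENNReal.ofReal_rpow_of_nonneg (norm_nonneg _) hP.le,
        ← ENNReal.ofReal_mul hC.le]
      have h2 : C * ‖ω‖ ^ (2 * k - 2 * s) ≤ 1 / 2 := by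
        have h3 : ‖ω‖ ^ (2 * k - 2 * s) ≤ δ ^ (2 * k - 2 * s) :=
          Real.rpow_le_rpow (norm_nonneg _) (by linarith) hP.le
        nlinarith
      refine le_trans (ENNReal.ofReal_le_ofReal h2) ?_
      rw [show (1:ℝ)/2 = 2⁻¹ by norm_num, ENNReal.ofReal_inv_of_pos two_pos]
      simp
    -- step B: Ts ≤ 2⁻¹ * Ts + ofReal C * (Q * r^(2s) * r^P)
    have hB : Ts ≤ 2⁻¹ * Ts
        + ENNReal.ofReal C * (Q * r ^ (2 * s) * r ^ (2 * k - 2 * s)) := by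
      have h1 : Ts ≤ ENNReal.ofReal C
          * (fullBracket d s φhat ω * r ^ (2 * k - 2 * s)) :=
        (ENNReal.div_le_iff_le_mul (Or.inr ENNReal.ofReal_ne_top)
          (Or.inr (ENNReal.ofReal_pos.2 hC).ne')).1 hMω
      have h2 : fullBracket d s φhat ω = Ts + Q * r ^ (2 * s) := rfl
      calc Ts ≤ ENNReal.ofReal C * ((Ts + Q * r ^ (2 * s)) * r ^ (2 * k - 2 * s)) := by
            rw [← h2]; exact h1
      _ = (ENNReal.ofReal C * r ^ (2 * k - 2 * s)) * Ts
            + ENNReal.ofReal C * (Q * r ^ (2 * s) * r ^ (2 * k - 2 * s)) := by ring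
      _ ≤ 2⁻¹ * Ts + ENNReal.ofReal C * (Q * r ^ (2 * s) * r ^ (2 * k - 2 * s)) :=
            add_le_add_left (mul_le_mul_left hA _) _
    -- step C: Ts ≤ 2 * (...)
    have hC2 : Ts ≤ 2 * (ENNReal.ofReal C * (Q * r ^ (2 * s) * r ^ (2 * k - 2 * s))) := by
      have h1 : Ts - 2⁻¹ * Ts ≤ ENNReal.ofReal C * (Q * r ^ (2 * s) * r ^ (2 * k - 2 * s)) :=
        tsub_le_iff_left.2 hB
      rw [show (2:ℝ≥0∞)⁻¹ * Ts = Ts / 2 by rw [ENNReal.div_eq_inv_mul],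
        ENNReal.sub_half hfin.ne] at h1
      have h2 := (ENNReal.div_le_iff_le_mul (Or.inl two_ne_zero)
        (Or.inl ENNReal.ofNat_ne_top)).1 h1
      rwa [mul_comm] at h2
    -- key: Ts ≤ ofReal (2C) * Q * r^(2k)
    have hkey : Ts ≤ ENNReal.ofReal (2 * C) * Q * r ^ (2 * k) := by
      by_cases hω0 : ω = 0
      · have hr0 : r = 0 := by rw [hrdef, hω0]; simp
        have : Ts ≤ 0 := by
          refine le_trans hC2 (le_of_eq ?_)
          rw [hr0, ENNReal.zero_rpow_of_pos hP]
          simp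
        exact le_trans this zero_le
      · have hr0 : r ≠ 0 := by
          rw [hrdef]
          simpa using hω0
        have hrt : r ≠ ⊤ := ENNReal.coe_ne_top
        have h1 : r ^ (2 * s) * r ^ (2 * k - 2 * s) = r ^ (2 * k) := by
          rw [← ENNReal.rpow_add _ _ hr0 hrt]
          norm_num
        have h2 : ENNReal.ofReal (2 * C) = 2 * ENNReal.ofReal C := by
          rw [ENNReal.ofReal_mul (by norm_num)]
          norm_num
        calc Ts ≤ 2 * (ENNReal.ofReal C * (Q * r ^ (2 * s) * r ^ (2 * k - 2 * s))) := hC2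
        _ = 2 * ENNReal.ofReal C * Q * (r ^ (2 * s) * r ^ (2 * k - 2 * s)) := by ring
        _ = ENNReal.ofReal (2 * C) * Q * r ^ (2 * k) := by rw [h1, h2]
    have hTtTs : Tt ≤ Ts := trunc_mono d hts φhat (by linarith)
    constructor
    · exact le_trans hTtTs hkey
    · refine (ENNReal.div_le_iff_le_mul (Or.inr ENNReal.ofReal_ne_top)
        (Or.inr (ENNReal.ofReal_pos.2 (by linarith)).ne')).2 ?_
      by_cases hω0 : ω = 0
      · have hr0 : r = 0 := by rw [hrdef, hω0]; simp
        have hTs0 : Ts = 0 := by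
          refine le_antisymm (le_trans hC2 (le_of_eq ?_)) zero_le
          rw [hr0, ENNReal.zero_rpow_of_pos hP]
          simp
        have hTt0 : Tt = 0 := le_antisymm (hTs0 ▸ hTtTs) zero_le
        rw [hTt0]
        exact zero_le
      · have hr0 : r ≠ 0 := by rw [hrdef]; simpa using hω0
        have hrt : r ≠ ⊤ := ENNReal.coe_ne_top
        have h1 : r ^ (2 * k) = r ^ (2 * t) * r ^ (2 * k - 2 * t) := by
          rw [← ENNReal.rpow_add _ _ hr0 hrt]
          norm_num
        have h2 : Q * r ^ (2 * t) ≤ fullBracket d t φhat ω := le_add_self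
        calc Tt ≤ ENNReal.ofReal (2 * C) * Q * r ^ (2 * k) := le_trans hTtTs hkey
        _ = ENNReal.ofReal (2 * C) * (Q * r ^ (2 * t)) * r ^ (2 * k - 2 * t) := by
              rw [h1]; ring
        _ ≤ ENNReal.ofReal (2 * C) * fullBracket d t φhat ω * r ^ (2 * k - 2 * t) := by
              exact mul_le_mul_left (mul_le_mul_right h2 _) _
        _ = ENNReal.ofReal (2 * C) * (fullBracket d t φhat ω * r ^ (2 * k - 2 * t)) := by
              ring
  exact ⟨main.mono fun ω h hω => (h hω).1, main.mono fun ω h hω => (h hω).2⟩
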